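/- For all integers n ≥ 2 and N ≥ 2, the partial product over primes p ≥ N satisfies: 1 - 1/((n-1)(N-1)^{n-1}) < ∏_{p prime, p ≥ N} α_{p,n} < 1, and 1 < ∏_{p prime, p ≥ N} α_{p,n}^{-1} < 1 + 1/((n-1)(N-1)^{n-1}), where α_{p,n} = (1 - p^{-n})/(1 - p^{-(n+1)}). -/

import Mathlib

open Finset Filter

lemma TPA.pow_sub_pow_ge (k : ℕ) {x : ℝ} (hx : 2 ≤ x) :
    (k : ℝ) * (x - 1) ^ (k - 1) ≤ x ^ k - (x - 1) ^ k := by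
  have h01 : (0:ℝ) ≤ x - 1 := by linarith
  have hg := geom_sum₂_mul x (x - 1) k
  rw [show x - (x - 1) = 1 by ring, mul_one] at hg
  rw [← hg]
  calc (k:ℝ) * (x - 1) ^ (k - 1) = ∑ _i ∈ range k, (x - 1) ^ (k - 1) := by
        rw [Finset.sum_const, card_range, nsmul_eq_mul]
    _ ≤ ∑ i ∈ range k, x ^ i * (x - 1) ^ (k - 1 - i) := by
        apply Finset.sum_le_sum
        intro i hi
        have hik : i ≤ k - 1 := Nat.le_pred_of_lt (mem_range.mp hi)
        calc (x - 1) ^ (k - 1) = (x - 1) ^ i * (x - 1) ^ (k - 1 - i) := by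
              rw [← pow_add]; congr 1; omega
          _ ≤ x ^ i * (x - 1) ^ (k - 1 - i) :=
              mul_le_mul_of_nonneg_right (pow_le_pow_left₀ h01 (by linarith) i)
                (pow_nonneg h01 _)

lemma TPA.tele_step (n : ℕ) (hn : 2 ≤ n) {x : ℝ} (hx : 2 ≤ x) :
    1 / x ^ n < (1 / ((n : ℝ) - 1)) * (1 / (x - 1) ^ (n - 1) - 1 / x ^ (n - 1)) := by
  set k := n - 1 with hkdef
  have hkn : (n:ℝ) - 1 = (k:ℝ) := by
    have : (k:ℝ) = ((n:ℝ) - 1) := by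
      rw [hkdef, Nat.cast_sub (by omega : 1 ≤ n)]; norm_num
    linarith
  have hk1 : 1 ≤ k := by omega
  have hx0 : (0:ℝ) < x := by linarith
  have hy0 : (0:ℝ) < x - 1 := by linarith
  have hxk : (0:ℝ) < x ^ k := pow_pos hx0 k
  have hyk : (0:ℝ) < (x - 1) ^ k := pow_pos hy0 k
  have hk0 : (0:ℝ) < (k:ℝ) := by exact_mod_cast hk1
  have key := TPA.pow_sub_pow_ge k hx
  have h1 : 1 / (x - 1) ^ k - 1 / x ^ k = (x ^ k - (x - 1) ^ k) / ((x - 1) ^ k * x ^ k) := by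
    field_simp
  have h2 : (k:ℝ) * (x - 1) ^ (k - 1) / ((x - 1) ^ k * x ^ k) ≤ 1 / (x - 1) ^ k - 1 / x ^ k := by
    rw [h1]; exact div_le_div_of_nonneg_right key (by positivity) |>.trans_eq rfl
  have h3 : (k:ℝ) * (x - 1) ^ (k - 1) / ((x - 1) ^ k * x ^ k) = (k:ℝ) / ((x - 1) * x ^ k) := by
    rw [show (x - 1) ^ k = (x - 1) ^ (k - 1) * (x - 1) by rw [← pow_succ]; congr 1; omega]
    have h4 : (x - 1) ^ (k - 1) ≠ 0 := by positivity
    field_simp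
  rw [hkn]
  calc 1 / x ^ n = 1 / (x ^ k * x) := by
        rw [show n = k + 1 by omega, pow_succ]
    _ < 1 / ((x - 1) * x ^ k) := by
        apply one_div_lt_one_div_of_lt (by positivity)
        nlinarith
    _ = (1 / (k:ℝ)) * ((k:ℝ) / ((x - 1) * x ^ k)) := by
        field_simp
    _ = (1 / (k:ℝ)) * ((k:ℝ) * (x - 1) ^ (k - 1) / ((x - 1) ^ k * x ^ k)) := by rw [h3]
    _ ≤ (1 / (k:ℝ)) * (1 / (x - 1) ^ k - 1 / x ^ k) :=
        mul_le_mul_of_nonneg_left h2 (by positivity)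

lemma TPA.tail_summable (n N : ℕ) (hn : 2 ≤ n) :
    Summable (fun k : ℕ => 1 / ((N + k : ℕ) : ℝ) ^ n) :=
  (Real.summable_one_div_nat_pow.mpr (by omega)).comp_injective (add_right_injective N)

lemma TPA.tail_sum_lt (n N : ℕ) (hn : 2 ≤ n) (hN : 2 ≤ N) :
    (∑' k : ℕ, 1 / ((N + k : ℕ) : ℝ) ^ n) <
      1 / (((n : ℝ) - 1) * ((N : ℝ) - 1) ^ (n - 1)) := by
  set f : ℕ → ℝ := fun k => 1 / ((N + k : ℕ) : ℝ) ^ n with hf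
  set g : ℕ → ℝ := fun k => (1 / ((n:ℝ) - 1)) * (1 / (((N + k : ℕ) : ℝ) - 1) ^ (n - 1)) with hg
  set d : ℕ → ℝ := fun k => g k - g (k + 1) with hd
  have hx2 : ∀ k : ℕ, (2:ℝ) ≤ ((N + k : ℕ) : ℝ) := by
    intro k
    have : (2:ℕ) ≤ N + k := by omega
    exact_mod_cast this
  have hcast : ∀ k : ℕ, ((N + (k + 1) : ℕ) : ℝ) - 1 = ((N + k : ℕ) : ℝ) := by
    intro k; push_cast; ring
  have hfd : ∀ k, f k < d k := by
    intro k
    have := TPA.tele_step n hn (hx2 k)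
    simp only [hf, hd, hg, hcast k]
    rw [← mul_sub]
    exact this
  have hd0 : ∀ k, 0 ≤ d k := by
    intro k
    have h1 : 0 ≤ f k := by positivity
    linarith [hfd k]
  have hg0 : ∀ k, 0 ≤ g k := by
    intro k
    have h1 : (1:ℝ) ≤ ((N + k : ℕ) : ℝ) - 1 := by linarith [hx2 k]
    have h2 : (0:ℝ) < (n:ℝ) - 1 := by
      have : (2:ℝ) ≤ (n:ℝ) := by exact_mod_cast hn
      linarith
    positivity
  have hdsum_bound : ∀ K, ∑ i ∈ Finset.range K, d i ≤ g 0 := by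
    intro K
    rw [hd, Finset.sum_range_sub' g K]
    linarith [hg0 K]
  have hdsum : Summable d := summable_of_sum_range_le hd0 hdsum_bound
  have hfsum : Summable f := TPA.tail_summable n N hn
  have h1 : (∑' k, f k) < ∑' k, d k :=
    Summable.tsum_lt_tsum (fun k => (hfd k).le) (hfd 0) hfsum hdsum
  have h2 : (∑' k, d k) ≤ g 0 := Summable.tsum_le_of_sum_range_le hdsum hdsum_bound
  have h3 : g 0 = 1 / (((n : ℝ) - 1) * ((N : ℝ) - 1) ^ (n - 1)) := by
    have hn1 : (0:ℝ) < (n:ℝ) - 1 := by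
      have : (2:ℝ) ≤ (n:ℝ) := by exact_mod_cast hn
      linarith
    have hN1 : (0:ℝ) < (N:ℝ) - 1 := by
      have : (2:ℝ) ≤ (N:ℝ) := by exact_mod_cast hN
      linarith
    simp only [hg]
    rw [show ((N + 0 : ℕ) : ℝ) = (N:ℝ) by norm_num]
    rw [one_div_mul_one_div]
  linarith

lemma TPA.factor_facts (n : ℕ) (hn : 2 ≤ n) {r : ℝ} (hr : 2 ≤ r) :
    0 < (1 - 1 / r ^ n) / (1 - 1 / r ^ (n + 1)) ∧
    (1 - 1 / r ^ n) / (1 - 1 / r ^ (n + 1)) < 1 ∧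
    1 - 1 / r ^ n ≤ (1 - 1 / r ^ n) / (1 - 1 / r ^ (n + 1)) ∧
    ((1 - 1 / r ^ n) / (1 - 1 / r ^ (n + 1)))⁻¹ ≤ 1 + 1 / r ^ n := by
  have hr0 : (0:ℝ) < r := by linarith
  have hr1 : (1:ℝ) ≤ r := by linarith
  have hrn : (0:ℝ) < r ^ n := pow_pos hr0 n
  have hrn1 : (0:ℝ) < r ^ (n + 1) := pow_pos hr0 (n + 1)
  set u := 1 / r ^ n with hu
  set v := 1 / r ^ (n + 1) with hv
  have hvu : v < u := by
    apply one_div_lt_one_div_of_lt hrn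
    calc r ^ n = r ^ n * 1 := (mul_one _).symm
      _ < r ^ n * r := by nlinarith
      _ = r ^ (n + 1) := (pow_succ r n).symm
  have hu1 : u < 1 := by
    rw [hu, div_lt_one hrn]
    calc (1:ℝ) < 2 := one_lt_two
      _ ≤ r := hr
      _ ≤ r ^ n := le_self_pow₀ hr1 (by omega)
  have hv0 : 0 < v := by positivity
  have hu0 : 0 < u := by positivity
  have hden : 0 < 1 - v := by linarith
  have hnum : 0 < 1 - u := by linarith
  have hsq : u ^ 2 ≤ v := by
    have h1 : u ^ 2 = 1 / r ^ (2 * n) := by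
      rw [hu, div_pow, one_pow, ← pow_mul, mul_comm n 2]
    rw [h1, hv]
    apply one_div_le_one_div_of_le hrn1
    exact pow_le_pow_right₀ hr1 (by omega)
  refine ⟨div_pos hnum hden, ?_, ?_, ?_⟩
  · rw [div_lt_one hden]; linarith
  · rw [le_div_iff₀ hden]; nlinarith
  · rw [show (1 - u) / (1 - v) = ((1 - v) / (1 - u))⁻¹ by rw [inv_div], inv_inv,
      div_le_iff₀ hnum]
    nlinarith

lemma TPA.one_sub_sum_le_prod {β : Type*} (s : Finset β) (a : β → ℝ)
    (h0 : ∀ i ∈ s, 0 ≤ a i) (h1 : ∀ i ∈ s, a i ≤ 1) :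
    1 - ∑ i ∈ s, a i ≤ ∏ i ∈ s, (1 - a i) := by
  classical
  induction s using Finset.induction with
  | empty => simp
  | @insert j s hj ih =>
    rw [Finset.prod_insert hj, Finset.sum_insert hj]
    have h0' : ∀ i ∈ s, 0 ≤ a i := fun i hi => h0 i (Finset.mem_insert_of_mem hi)
    have h1' : ∀ i ∈ s, a i ≤ 1 := fun i hi => h1 i (Finset.mem_insert_of_mem hi)
    have ihs := ih h0' h1'
    have hj0 : 0 ≤ a j := h0 j (Finset.mem_insert_self j s)
    have hj1 : a j ≤ 1 := h1 j (Finset.mem_insert_self j s)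
    have hs0 : 0 ≤ ∑ i ∈ s, a i := Finset.sum_nonneg h0'
    nlinarith [ihs]

lemma TPA.finset_sum_le_tail (n N : ℕ) (hn : 2 ≤ n) (s : Finset ℕ)
    (hs : ∀ m ∈ s, N ≤ m) :
    ∑ m ∈ s, 1 / (m : ℝ) ^ n ≤ ∑' k : ℕ, 1 / ((N + k : ℕ) : ℝ) ^ n := by
  classical
  have hinj : Set.InjOn (fun m => m - N) s := by
    intro a ha b hb h
    have := hs a ha; have := hs b hb
    simp only at h; omega
  have h1 : ∑ m ∈ s, 1 / (m : ℝ) ^ n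
      = ∑ k ∈ s.image (fun m => m - N), 1 / ((N + k : ℕ) : ℝ) ^ n := by
    rw [Finset.sum_image hinj]
    apply Finset.sum_congr rfl
    intro m hm
    have : N + (m - N) = m := by have := hs m hm; omega
    rw [this]
  rw [h1]
  exact Summable.sum_le_tsum _ (fun k _ => by positivity)
    ((Real.summable_one_div_nat_pow.mpr (by omega)).comp_injective (add_right_injective N))

lemma TPA.prod_primes_injective {ι : Type*} (q : ι → ℕ) (hq : ∀ i, (q i).Prime)
    (hinj : Function.Injective q) :
    Function.Injective (fun t : Finset ι => ∏ p ∈ t, q p) := by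
  have key : ∀ t1 t2 : Finset ι, (∏ p ∈ t1, q p) = (∏ p ∈ t2, q p) →
      ∀ p ∈ t1, p ∈ t2 := by
    intro t1 t2 h p hp
    have hdvd : q p ∣ ∏ x ∈ t2, q x := h ▸ Finset.dvd_prod_of_mem q hp
    obtain ⟨i, hi, hdvd'⟩ := (Prime.dvd_finset_prod_iff (hq p).prime q).mp hdvd
    have : q p = q i := ((Nat.prime_dvd_prime_iff_eq (hq p) (hq i)).mp hdvd')
    rwa [hinj this]
  intro t1 t2 h
  ext p
  exact ⟨fun hp => key t1 t2 h p hp, fun hp => key t2 t1 h.symm p hp⟩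

lemma TPA.prod_one_add_le (n N : ℕ) (hn : 2 ≤ n) {ι : Type*} (q : ι → ℕ)
    (hq : ∀ i, (q i).Prime) (hqN : ∀ i, N ≤ q i) (hinj : Function.Injective q)
    (s : Finset ι) :
    ∏ p ∈ s, (1 + 1 / (q p : ℝ) ^ n) ≤ 1 + ∑' k : ℕ, 1 / ((N + k : ℕ) : ℝ) ^ n := by
  classical
  set M : Finset ι → ℕ := fun t => ∏ p ∈ t, q p with hM
  have hMinj : Function.Injective M := TPA.prod_primes_injective q hq hinj
  have step1 : ∏ p ∈ s, (1 + 1 / (q p : ℝ) ^ n)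
      = ∑ t ∈ s.powerset, 1 / ((M t : ℕ) : ℝ) ^ n := by
    rw [Finset.prod_congr rfl (fun p _ => add_comm 1 (1 / (q p : ℝ) ^ n)),
      Finset.prod_add]
    apply Finset.sum_congr rfl
    intro t _
    rw [Finset.prod_const_one, mul_one, Finset.prod_div_distrib, Finset.prod_const_one,
      Finset.prod_pow, hM]
    push_cast
    rfl
  have step2 : ∑ t ∈ s.powerset, 1 / ((M t : ℕ) : ℝ) ^ n
      = ∑ m ∈ s.powerset.image M, 1 / (m : ℝ) ^ n := by
    rw [Finset.sum_image (fun a _ b _ h => hMinj h)]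
  have h1mem : 1 ∈ s.powerset.image M := by
    apply Finset.mem_image.mpr
    exact ⟨∅, Finset.mem_powerset.mpr (Finset.empty_subset s), Finset.prod_empty⟩
  have step3 : ∑ m ∈ s.powerset.image M, 1 / (m : ℝ) ^ n
      = 1 + ∑ m ∈ (s.powerset.image M).erase 1, 1 / (m : ℝ) ^ n := by
    rw [← Finset.add_sum_erase _ _ h1mem]
    norm_num
  have hge : ∀ m ∈ (s.powerset.image M).erase 1, N ≤ m := by
    intro m hm
    obtain ⟨hne, hmem⟩ := Finset.mem_erase.mp hm
    obtain ⟨t, _, rfl⟩ := Finset.mem_image.mp hmem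
    rcases t.eq_empty_or_nonempty with rfl | ⟨p, hp⟩
    · simp [hM] at hne
    · have hdvd : q p ∣ M t := Finset.dvd_prod_of_mem q hp
      have hpos : 0 < M t := Finset.prod_pos (fun i _ => (hq i).pos)
      exact le_trans (hqN p) (Nat.le_of_dvd hpos hdvd)
  rw [step1, step2, step3]
  have := TPA.finset_sum_le_tail n N hn _ hge
  linarith
lemma TPA.main {ι : Type*} [Nonempty ι] (n N : ℕ) (hn : 2 ≤ n) (hN : 2 ≤ N) (q : ι → ℕ)
    (hq : ∀ i, (q i).Prime) (hqN : ∀ i, N ≤ q i) (hinj : Function.Injective q) :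
    Multipliable (fun i => (1 - 1 / (q i : ℝ) ^ n) / (1 - 1 / (q i : ℝ) ^ (n + 1))) ∧
    1 - 1 / (((n : ℝ) - 1) * ((N : ℝ) - 1) ^ (n - 1)) <
      (∏' i, (1 - 1 / (q i : ℝ) ^ n) / (1 - 1 / (q i : ℝ) ^ (n + 1))) ∧
    (∏' i, (1 - 1 / (q i : ℝ) ^ n) / (1 - 1 / (q i : ℝ) ^ (n + 1))) < 1 ∧
    1 < (∏' i, ((1 - 1 / (q i : ℝ) ^ n) / (1 - 1 / (q i : ℝ) ^ (n + 1)))⁻¹) ∧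
    (∏' i, ((1 - 1 / (q i : ℝ) ^ n) / (1 - 1 / (q i : ℝ) ^ (n + 1)))⁻¹) <
      1 + 1 / (((n : ℝ) - 1) * ((N : ℝ) - 1) ^ (n - 1)) := by
  classical
  obtain ⟨F, hF⟩ : ∃ F : ι → ℝ,
      ∀ i, F i = (1 - 1 / (q i : ℝ) ^ n) / (1 - 1 / (q i : ℝ) ^ (n + 1)) :=
    ⟨fun i => (1 - 1 / (q i : ℝ) ^ n) / (1 - 1 / (q i : ℝ) ^ (n + 1)), fun i => rfl⟩
  simp only [← hF]
  have hq2 : ∀ i, (2:ℝ) ≤ (q i : ℝ) := fun i => by exact_mod_cast (hq i).two_le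
  have hFpos : ∀ i, 0 < F i := fun i => by
    rw [hF]; exact (TPA.factor_facts n hn (hq2 i)).1
  have hFlt1 : ∀ i, F i < 1 := fun i => by
    rw [hF]; exact (TPA.factor_facts n hn (hq2 i)).2.1
  have hFlb : ∀ i, 1 - 1 / (q i : ℝ) ^ n ≤ F i := fun i => by
    rw [hF]; exact (TPA.factor_facts n hn (hq2 i)).2.2.1
  have hFinv_ub : ∀ i, (F i)⁻¹ ≤ 1 + 1 / (q i : ℝ) ^ n := fun i => by
    rw [hF]; exact (TPA.factor_facts n hn (hq2 i)).2.2.2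
  have hFinv_gt1 : ∀ i, 1 < (F i)⁻¹ := fun i => (one_lt_inv₀ (hFpos i)).2 (hFlt1 i)
  have hu_le1 : ∀ i, 1 / (q i : ℝ) ^ n ≤ 1 := by
    intro i
    have h1 : (1:ℝ) ≤ (q i : ℝ) ^ n := by
      have := pow_le_pow_left₀ (by norm_num : (0:ℝ) ≤ 1) (by linarith [hq2 i]) n
      simpa using this
    rw [div_le_one (by linarith)]
    linarith
  have husum : Summable (fun i => 1 / (q i : ℝ) ^ n) :=
    (Real.summable_one_div_nat_pow.mpr (by omega)).comp_injective hinj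
  have hlog : Summable (fun i => Real.log (F i)) := by
    have hneg : ∀ i, 0 ≤ -Real.log (F i) := fun i =>
      neg_nonneg.mpr (Real.log_nonpos (hFpos i).le (hFlt1 i).le)
    have hub : ∀ i, -Real.log (F i) ≤ 1 / (q i : ℝ) ^ n := by
      intro i
      rw [← Real.log_inv]
      calc Real.log (F i)⁻¹ ≤ (F i)⁻¹ - 1 :=
            Real.log_le_sub_one_of_pos (inv_pos.mpr (hFpos i))
        _ ≤ 1 / (q i : ℝ) ^ n := by linarith [hFinv_ub i]
    have h := husum.of_nonneg_of_le hneg hub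
    simpa using h.neg
  have hMul : Multipliable F :=
    Real.multipliable_of_summable_log (fun i => hFpos i) hlog
  have hMulInv : Multipliable (fun i => (F i)⁻¹) :=
    Real.multipliable_of_summable_log (fun i => inv_pos.mpr (hFpos i))
      (by simpa [Real.log_inv] using hlog.neg)
  set Tt : ℝ := ∑' k : ℕ, 1 / ((N + k : ℕ) : ℝ) ^ n with hTt
  have hTS : Tt < 1 / (((n : ℝ) - 1) * ((N : ℝ) - 1) ^ (n - 1)) :=
    TPA.tail_sum_lt n N hn hN
  -- finite sums of u are at most Tt
  have hsum_le : ∀ s : Finset ι, ∑ i ∈ s, 1 / (q i : ℝ) ^ n ≤ Tt := by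
    intro s
    have h1 : ∑ m ∈ s.image q, 1 / (m : ℝ) ^ n = ∑ i ∈ s, 1 / (q i : ℝ) ^ n :=
      Finset.sum_image (fun a _ b _ h => hinj h)
    rw [← h1]
    exact TPA.finset_sum_le_tail n N hn _ (fun m hm => by
      obtain ⟨i, _, rfl⟩ := Finset.mem_image.mp hm; exact hqN i)
  -- lower bound for tprod F
  have hlb : 1 - Tt ≤ ∏' i, F i := by
    apply le_hasProd_of_le_prod hMul.hasProd
    intro s
    calc 1 - Tt ≤ 1 - ∑ i ∈ s, 1 / (q i : ℝ) ^ n := by linarith [hsum_le s]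
      _ ≤ ∏ i ∈ s, (1 - 1 / (q i : ℝ) ^ n) :=
          TPA.one_sub_sum_le_prod s _ (fun i _ => by positivity) (fun i _ => hu_le1 i)
      _ ≤ ∏ i ∈ s, F i :=
          Finset.prod_le_prod (fun i _ => by linarith [hu_le1 i]) (fun i _ => hFlb i)
  obtain ⟨i0⟩ := ‹Nonempty ι›
  -- upper bound for tprod F
  have hub : (∏' i, F i) ≤ F i0 := by
    apply le_of_tendsto hMul.hasProd
    filter_upwards [eventually_ge_atTop {i0}] with s hs
    have hi0 : i0 ∈ s := hs (Finset.mem_singleton_self i0)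
    rw [← Finset.mul_prod_erase s F hi0]
    have h1 : ∏ i ∈ s.erase i0, F i ≤ 1 :=
      Finset.prod_le_one (fun i _ => (hFpos i).le) (fun i _ => (hFlt1 i).le)
    calc F i0 * ∏ i ∈ s.erase i0, F i ≤ F i0 * 1 :=
          mul_le_mul_of_nonneg_left h1 (hFpos i0).le
      _ = F i0 := mul_one _
  -- lower bound for tprod F⁻¹
  have hlb2 : (F i0)⁻¹ ≤ ∏' i, (F i)⁻¹ := by
    apply ge_of_tendsto hMulInv.hasProd
    filter_upwards [eventually_ge_atTop {i0}] with s hs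
    have hi0 : i0 ∈ s := hs (Finset.mem_singleton_self i0)
    rw [← Finset.mul_prod_erase s (fun i => (F i)⁻¹) hi0]
    have h1 : (1:ℝ) ≤ ∏ i ∈ s.erase i0, (F i)⁻¹ := by
      have := Finset.prod_le_prod (s := s.erase i0) (f := fun _ => (1:ℝ))
        (g := fun i => (F i)⁻¹) (fun i _ => zero_le_one) (fun i _ => (hFinv_gt1 i).le)
      simpa using this
    calc (F i0)⁻¹ = (F i0)⁻¹ * 1 := (mul_one _).symm
      _ ≤ (F i0)⁻¹ * ∏ i ∈ s.erase i0, (F i)⁻¹ :=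
          mul_le_mul_of_nonneg_left h1 (inv_pos.mpr (hFpos i0)).le
  -- upper bound for tprod F⁻¹
  have hub2 : (∏' i, (F i)⁻¹) ≤ 1 + Tt := by
    apply hasProd_le_of_prod_le hMulInv.hasProd
    intro s
    calc ∏ i ∈ s, (F i)⁻¹ ≤ ∏ i ∈ s, (1 + 1 / (q i : ℝ) ^ n) :=
          Finset.prod_le_prod (fun i _ => (inv_pos.mpr (hFpos i)).le)
            (fun i _ => hFinv_ub i)
      _ ≤ 1 + Tt := TPA.prod_one_add_le n N hn q hq hqN hinj s
  exact ⟨hMul, by linarith, lt_of_le_of_lt hub (hFlt1 i0),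
    lt_of_lt_of_le (hFinv_gt1 i0) hlb2, by linarith⟩

theorem tail_prod_alpha_bounds (n N : ℕ) (hn : 2 ≤ n) (hN : 2 ≤ N) :
    Multipliable (fun p : {p : Nat.Primes // N ≤ (p : ℕ)} =>
      (1 - 1 / (((p : Nat.Primes) : ℕ) : ℝ) ^ n) /
        (1 - 1 / (((p : Nat.Primes) : ℕ) : ℝ) ^ (n + 1))) ∧
    1 - 1 / (((n : ℝ) - 1) * ((N : ℝ) - 1) ^ (n - 1)) <
      (∏' p : {p : Nat.Primes // N ≤ (p : ℕ)},
        (1 - 1 / (((p : Nat.Primes) : ℕ) : ℝ) ^ n) /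
          (1 - 1 / (((p : Nat.Primes) : ℕ) : ℝ) ^ (n + 1))) ∧
    (∏' p : {p : Nat.Primes // N ≤ (p : ℕ)},
        (1 - 1 / (((p : Nat.Primes) : ℕ) : ℝ) ^ n) /
          (1 - 1 / (((p : Nat.Primes) : ℕ) : ℝ) ^ (n + 1))) < 1 ∧
    1 < (∏' p : {p : Nat.Primes // N ≤ (p : ℕ)},
        ((1 - 1 / (((p : Nat.Primes) : ℕ) : ℝ) ^ n) /
          (1 - 1 / (((p : Nat.Primes) : ℕ) : ℝ) ^ (n + 1)))⁻¹) ∧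
    (∏' p : {p : Nat.Primes // N ≤ (p : ℕ)},
        ((1 - 1 / (((p : Nat.Primes) : ℕ) : ℝ) ^ n) /
          (1 - 1 / (((p : Nat.Primes) : ℕ) : ℝ) ^ (n + 1)))⁻¹) <
      1 + 1 / (((n : ℝ) - 1) * ((N : ℝ) - 1) ^ (n - 1)) := by
  have hne : Nonempty {p : Nat.Primes // N ≤ (p : ℕ)} := by
    obtain ⟨q0, hq0N, hq0p⟩ := Nat.exists_infinite_primes N
    exact ⟨⟨⟨q0, hq0p⟩, hq0N⟩⟩
  exact TPA.main n N hn hN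
    (fun p : {p : Nat.Primes // N ≤ (p : ℕ)} => ((p : Nat.Primes) : ℕ))
    (fun p => (p : Nat.Primes).2) (fun p => p.2)
    (fun a b h => Subtype.ext (Nat.Primes.coe_nat_injective h))
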